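/- In a spherical triangle ABC on the unit sphere, if D and E are the midpoints of the sides AB and BC respectively (midpoints along the minimizing great-circle arcs), then the spherical distance DE satisfies DE > AC/2. -/

import Mathlib

set_option maxHeartbeats 1000000

open scoped RealInnerProductSpace

/-- The intrinsic (geodesic) distance on the unit sphere. -/
noncomputable def sphDist (p q : EuclideanSpace ℝ (Fin 3)) : ℝ :=
  Real.arccos ⟪p, q⟫

section Aux

open Real

local notation "V" => EuclideanSpace ℝ (Fin 3)

lemma sph_inner_bds (u v : V) (hu : ‖u‖ = 1) (hv : ‖v‖ = 1) :
    -1 ≤ ⟪u, v⟫ ∧ ⟪u, v⟫ ≤ 1 := by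
  have h := abs_real_inner_le_norm u v
  rw [hu, hv] at h
  exact abs_le.mp (by linarith)

lemma sph_strict_bds (u v : V) (hu : ‖u‖ = 1) (hv : ‖v‖ = 1)
    (hne : u ≠ v) (hne' : u ≠ -v) : -1 < ⟪u, v⟫ ∧ ⟪u, v⟫ < 1 := by
  constructor
  · have h := (inner_lt_one_iff_real_of_norm_eq_one hu (by rw [norm_neg]; exact hv)).mpr hne'
    rw [inner_neg_right] at h
    linarith
  · exact (inner_lt_one_iff_real_of_norm_eq_one hu hv).mpr hne

lemma sph_arccos_lt_pi {x : ℝ} (h : -1 < x) : Real.arccos x < π := by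
  refine lt_of_le_of_ne (Real.arccos_le_pi x) fun hx => ?_
  exact absurd (Real.arccos_eq_pi.mp hx) (not_le.mpr h)

lemma coeffs_of_indep {u v w : V} (h : LinearIndependent ℝ ![u, v, w]) :
    ∀ a b c : ℝ, a • u + b • v + c • w = 0 → a = 0 ∧ b = 0 ∧ c = 0 := by
  intro a b c habc
  have h' := Fintype.linearIndependent_iff.mp h ![a, b, c]
  have hs : ∑ i, ![a, b, c] i • ![u, v, w] i = 0 := by
    rw [Fin.sum_univ_three]
    simpa using habc
  exact ⟨h' hs 0, h' hs 1, h' hs 2⟩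

/-- Strict spherical triangle inequality for linearly independent unit vectors. -/
lemma sph_tri (u v w : V) (hu : ‖u‖ = 1) (hv : ‖v‖ = 1) (hw : ‖w‖ = 1)
    (hcoef : ∀ a b c : ℝ, a • u + b • v + c • w = 0 → a = 0 ∧ b = 0 ∧ c = 0) :
    sphDist u w < sphDist u v + sphDist v w := by
  have hvv : ⟪v, v⟫ = 1 := by rw [real_inner_self_eq_norm_sq, hv]; norm_num
  have huv_ne : u ≠ v := fun h => one_ne_zero (hcoef 1 (-1) 0 (by simp [h])).1
  have huv_ne' : u ≠ -v := fun h => one_ne_zero (hcoef 1 1 0 (by simp [h])).1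
  have hvw_ne : v ≠ w := fun h => one_ne_zero (hcoef 0 1 (-1) (by simp [h])).2.1
  have hvw_ne' : v ≠ -w := fun h => one_ne_zero (hcoef 0 1 1 (by simp [h])).2.1
  have buv := sph_inner_bds u v hu hv
  have bvw := sph_inner_bds v w hv hw
  have buw := sph_inner_bds u w hu hw
  have suv := sph_strict_bds u v hu hv huv_ne huv_ne'
  have svw := sph_strict_bds v w hv hw hvw_ne hvw_ne'
  simp only [sphDist]
  set α := Real.arccos ⟪u, v⟫ with hαdef
  set β := Real.arccos ⟪v, w⟫ with hβdef
  have hcα : Real.cos α = ⟪u, v⟫ := Real.cos_arccos buv.1 buv.2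
  have hcβ : Real.cos β = ⟪v, w⟫ := Real.cos_arccos bvw.1 bvw.2
  have hα0 : 0 ≤ α := Real.arccos_nonneg _
  have hβ0 : 0 ≤ β := Real.arccos_nonneg _
  have hαpos : 0 < α := Real.arccos_pos.mpr suv.2
  have hβpos : 0 < β := Real.arccos_pos.mpr svw.2
  have hαltπ : α < π := sph_arccos_lt_pi suv.1
  have hβltπ : β < π := sph_arccos_lt_pi svw.1
  have hsα : 0 < Real.sin α := Real.sin_pos_of_pos_of_lt_pi hαpos hαltπ
  have hsβ : 0 < Real.sin β := Real.sin_pos_of_pos_of_lt_pi hβpos hβltπ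
  -- orthogonal components
  have huu : ⟪u, u⟫ = 1 := by rw [real_inner_self_eq_norm_sq, hu]; norm_num
  have hww : ⟪w, w⟫ = 1 := by rw [real_inner_self_eq_norm_sq, hw]; norm_num
  have hvu : ⟪v, u⟫ = Real.cos α := by rw [real_inner_comm]; exact hcα.symm
  have hwv : ⟪w, v⟫ = Real.cos β := by rw [real_inner_comm]; exact hcβ.symm
  have huv' : ⟪u, v⟫ = Real.cos α := hcα.symm
  have hvw' : ⟪v, w⟫ = Real.cos β := hcβ.symm
  have hu'w' : ⟪u - ⟪u, v⟫ • v, w - ⟪v, w⟫ • v⟫ = ⟪u, w⟫ - ⟪u, v⟫ * ⟪v, w⟫ := by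
    simp only [inner_sub_left, inner_sub_right, real_inner_smul_left, real_inner_smul_right,
      hvv, hvu, hwv, huv', hvw']
    ring
  have hnu' : ‖u - ⟪u, v⟫ • v‖ = Real.sin α := by
    have h2 : ‖u - ⟪u, v⟫ • v‖ ^ 2 = Real.sin α ^ 2 := by
      rw [← real_inner_self_eq_norm_sq]
      simp only [inner_sub_left, inner_sub_right, real_inner_smul_left, real_inner_smul_right,
        hvv, hvu, huv', huu]
      linarith [Real.sin_sq_add_cos_sq α]
    calc ‖u - ⟪u, v⟫ • v‖ = Real.sqrt (‖u - ⟪u, v⟫ • v‖ ^ 2) :=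
          (Real.sqrt_sq (norm_nonneg _)).symm
      _ = Real.sin α := by rw [h2, Real.sqrt_sq hsα.le]
  have hnw' : ‖w - ⟪v, w⟫ • v‖ = Real.sin β := by
    have h2 : ‖w - ⟪v, w⟫ • v‖ ^ 2 = Real.sin β ^ 2 := by
      rw [← real_inner_self_eq_norm_sq]
      simp only [inner_sub_left, inner_sub_right, real_inner_smul_left, real_inner_smul_right,
        hvv, hwv, hvw', hww]
      linarith [Real.sin_sq_add_cos_sq β]
    calc ‖w - ⟪v, w⟫ • v‖ = Real.sqrt (‖w - ⟪v, w⟫ • v‖ ^ 2) :=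
          (Real.sqrt_sq (norm_nonneg _)).symm
      _ = Real.sin β := by rw [h2, Real.sqrt_sq hsβ.le]
  -- strict Cauchy-Schwarz
  have hne : ⟪u - ⟪u, v⟫ • v, w - ⟪v, w⟫ • v⟫ ≠ -(Real.sin α * Real.sin β) := by
    intro heq
    have h1 : ⟪-(u - ⟪u, v⟫ • v), w - ⟪v, w⟫ • v⟫
        = ‖-(u - ⟪u, v⟫ • v)‖ * ‖w - ⟪v, w⟫ • v‖ := by
      rw [inner_neg_left, heq, norm_neg, hnu', hnw']; ring
    have h2 := inner_eq_norm_mul_iff_real.mp h1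
    rw [norm_neg, hnu', hnw'] at h2
    have h3 : (-(Real.sin β)) • u + (Real.sin β * ⟪u, v⟫ + Real.sin α * ⟪v, w⟫) • v
        + (-(Real.sin α)) • w = 0 := by
      have hexp : (-(Real.sin β)) • u + (Real.sin β * ⟪u, v⟫ + Real.sin α * ⟪v, w⟫) • v
          + (-(Real.sin α)) • w
          = Real.sin β • -(u - ⟪u, v⟫ • v) - Real.sin α • (w - ⟪v, w⟫ • v) := by
        module
      rw [hexp, h2, sub_self]
    obtain ⟨_, _, hc3⟩ := hcoef _ _ _ h3
    exact hsα.ne' (neg_eq_zero.mp hc3)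
  have hCS : -(Real.sin α * Real.sin β) ≤ ⟪u - ⟪u, v⟫ • v, w - ⟪v, w⟫ • v⟫ := by
    have h := abs_real_inner_le_norm (u - ⟪u, v⟫ • v) (w - ⟪v, w⟫ • v)
    rw [hnu', hnw'] at h
    linarith [neg_abs_le ⟪u - ⟪u, v⟫ • v, w - ⟪v, w⟫ • v⟫]
  have hkey : Real.cos (α + β) < ⟪u, w⟫ := by
    have hlt := lt_of_le_of_ne hCS (Ne.symm hne)
    rw [hu'w'] at hlt
    rw [Real.cos_add, hcα, hcβ]
    linarith
  rcases le_or_gt (α + β) π with hle | hgt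
  · have h1 : Real.arccos ⟪u, w⟫ < Real.arccos (Real.cos (α + β)) :=
      Real.strictAntiOn_arccos ⟨Real.neg_one_le_cos _, Real.cos_le_one _⟩
        ⟨buw.1, buw.2⟩ hkey
    rwa [Real.arccos_cos (by linarith) hle] at h1
  · have h1 : Real.arccos ⟪u, w⟫ < π := sph_arccos_lt_pi
      (lt_of_le_of_lt (Real.neg_one_le_cos _) hkey)
    linarith

/-- The midpoint of a minimizing arc is the normalized sum. -/
lemma sph_midpoint (u v d : V) (hu : ‖u‖ = 1) (hv : ‖v‖ = 1) (hd : ‖d‖ = 1)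
    (hne : u ≠ v) (hne' : u ≠ -v)
    (h1 : sphDist u d = sphDist d v) (h2 : sphDist u d + sphDist d v = sphDist u v) :
    u + v = (2 * Real.cos (sphDist u v / 2)) • d := by
  have bud := sph_inner_bds u d hu hd
  have bdv := sph_inner_bds d v hd hv
  have buv := sph_inner_bds u v hu hv
  have suv := sph_strict_bds u v hu hv hne hne'
  simp only [sphDist] at h1 h2 ⊢
  set c := Real.arccos ⟪u, v⟫ with hcdef
  have hc0 : 0 < c := Real.arccos_pos.mpr suv.2
  have hcπ : c < π := sph_arccos_lt_pi suv.1
  have ht : Real.arccos ⟪u, d⟫ = c / 2 := by linarith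
  have ht' : Real.arccos ⟪d, v⟫ = c / 2 := by linarith
  have hcpos : 0 < Real.cos (c / 2) :=
    Real.cos_pos_of_mem_Ioo ⟨by linarith [Real.pi_pos], by linarith⟩
  have hspos : 0 < Real.sin (c / 2) :=
    Real.sin_pos_of_pos_of_lt_pi (by linarith) (by linarith [Real.pi_pos])
  have hdd : ⟪d, d⟫ = 1 := by rw [real_inner_self_eq_norm_sq, hd]; norm_num
  have huu : ⟪u, u⟫ = 1 := by rw [real_inner_self_eq_norm_sq, hu]; norm_num
  have hvv : ⟪v, v⟫ = 1 := by rw [real_inner_self_eq_norm_sq, hv]; norm_num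
  set k := Real.cos (c / 2) with hkdef
  have hud : ⟪u, d⟫ = k := by
    rw [hkdef, ← ht]; exact (Real.cos_arccos bud.1 bud.2).symm
  have hdv : ⟪d, v⟫ = k := by
    rw [hkdef, ← ht']; exact (Real.cos_arccos bdv.1 bdv.2).symm
  have hdu : ⟪d, u⟫ = k := by rw [real_inner_comm]; exact hud
  have hvd : ⟪v, d⟫ = k := by rw [real_inner_comm]; exact hdv
  have hc2 : Real.cos c = 2 * k ^ 2 - 1 := by
    have h := Real.cos_two_mul (c / 2)
    rw [show 2 * (c / 2) = c by ring] at h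
    rw [h, hkdef]
  have huvc : ⟪u, v⟫ = 2 * k ^ 2 - 1 := by
    have h := Real.cos_arccos buv.1 buv.2
    rw [← hcdef] at h
    rw [← h, hc2]
  have hsq : Real.sin (c / 2) ^ 2 = 1 - k ^ 2 := by
    rw [hkdef]
    linarith [Real.sin_sq_add_cos_sq (c / 2)]
  have hinner : ⟪u - k • d, v - k • d⟫ = -(Real.sin (c / 2) * Real.sin (c / 2)) := by
    simp only [inner_sub_left, inner_sub_right, real_inner_smul_left, real_inner_smul_right,
      hdd, hud, hdv, hdu, hvd, huvc]
    linarith [hsq]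
  have hnu' : ‖u - k • d‖ = Real.sin (c / 2) := by
    have hsq2 : ‖u - k • d‖ ^ 2 = Real.sin (c / 2) ^ 2 := by
      rw [← real_inner_self_eq_norm_sq]
      simp only [inner_sub_left, inner_sub_right, real_inner_smul_left, real_inner_smul_right,
        hdd, hud, hdu, huu]
      linarith [hsq]
    calc ‖u - k • d‖ = Real.sqrt (‖u - k • d‖ ^ 2) := (Real.sqrt_sq (norm_nonneg _)).symm
      _ = Real.sin (c / 2) := by rw [hsq2, Real.sqrt_sq hspos.le]
  have hnv' : ‖v - k • d‖ = Real.sin (c / 2) := by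
    have hsq2 : ‖v - k • d‖ ^ 2 = Real.sin (c / 2) ^ 2 := by
      rw [← real_inner_self_eq_norm_sq]
      simp only [inner_sub_left, inner_sub_right, real_inner_smul_left, real_inner_smul_right,
        hdd, hdv, hvd, hvv]
      linarith [hsq]
    calc ‖v - k • d‖ = Real.sqrt (‖v - k • d‖ ^ 2) := (Real.sqrt_sq (norm_nonneg _)).symm
      _ = Real.sin (c / 2) := by rw [hsq2, Real.sqrt_sq hspos.le]
  have heq : ⟪-(u - k • d), v - k • d⟫ = ‖-(u - k • d)‖ * ‖v - k • d‖ := by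
    rw [inner_neg_left, hinner, norm_neg, hnu', hnv']; ring
  have h3 := inner_eq_norm_mul_iff_real.mp heq
  rw [norm_neg, hnu', hnv'] at h3
  -- h3 : sin (c/2) • -(u - k • d) = sin (c/2) • (v - k • d)
  have h4 : -(u - k • d) = v - k • d := smul_right_injective _ hspos.ne' h3
  have h5 : u + v - (2 * k) • d = (v - k • d) - -(u - k • d) := by module
  have h6 : u + v - (2 * k) • d = 0 := by rw [h5, ← h4, sub_self]
  have := sub_eq_zero.mp h6
  rw [this]

end Aux

/-- Menelaus (Spherics, Prop. 27): in a nondegenerate spherical triangle `ABC` on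
the unit sphere, if `D` and `E` are the midpoints of the minimizing great-circle
arcs `AB` and `BC` respectively, then `DE > AC / 2`. A point `D` is the midpoint
of the minimizing arc `AB` iff it lies on the sphere, is equidistant from `A` and
`B`, and `d(A,D) + d(D,B) = d(A,B)`. -/
theorem spherical_midline_gt_half_base
    (A B C D E : EuclideanSpace ℝ (Fin 3))
    (hA : ‖A‖ = 1) (hB : ‖B‖ = 1) (hC : ‖C‖ = 1) (hD : ‖D‖ = 1) (hE : ‖E‖ = 1)
    (hindep : LinearIndependent ℝ ![A, B, C])
    (hDmid : sphDist A D = sphDist D B ∧ sphDist A D + sphDist D B = sphDist A B)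
    (hEmid : sphDist B E = sphDist E C ∧ sphDist B E + sphDist E C = sphDist B C) :
    sphDist A C / 2 < sphDist D E := by
  obtain ⟨hD1, hD2⟩ := hDmid
  obtain ⟨hE1, hE2⟩ := hEmid
  have hcoef := coeffs_of_indep hindep
  have hAB : A ≠ B := fun h => one_ne_zero (hcoef 1 (-1) 0 (by simp [h])).1
  have hAB' : A ≠ -B := fun h => one_ne_zero (hcoef 1 1 0 (by simp [h])).1
  have hBC : B ≠ C := fun h => one_ne_zero (hcoef 0 1 (-1) (by simp [h])).2.1
  have hBC' : B ≠ -C := fun h => one_ne_zero (hcoef 0 1 1 (by simp [h])).2.1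
  have hAC : A ≠ C := fun h => one_ne_zero (hcoef 1 0 (-1) (by simp [h])).1
  have hAC' : A ≠ -C := fun h => one_ne_zero (hcoef 1 0 1 (by simp [h])).1
  have hDrel := sph_midpoint A B D hA hB hD hAB hAB' hD1 hD2
  have hErel := sph_midpoint B C E hB hC hE hBC hBC' hE1 hE2
  -- permuted coefficient facts
  have hcoefBAC : ∀ a b c : ℝ, a • B + b • A + c • C = 0 → a = 0 ∧ b = 0 ∧ c = 0 := by
    intro a b c h
    have h' : b • A + a • B + c • C = 0 := by rw [← h]; module
    obtain ⟨x1, x2, x3⟩ := hcoef _ _ _ h'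
    exact ⟨x2, x1, x3⟩
  have hcoefACB : ∀ a b c : ℝ, a • A + b • C + c • B = 0 → a = 0 ∧ b = 0 ∧ c = 0 := by
    intro a b c h
    have h' : a • A + c • B + b • C = 0 := by rw [← h]; module
    obtain ⟨x1, x2, x3⟩ := hcoef _ _ _ h'
    exact ⟨x1, x3, x2⟩
  have t1 : sphDist A C < sphDist A B + sphDist B C := sph_tri A B C hA hB hC hcoef
  have t2 : sphDist B C < sphDist B A + sphDist A C := sph_tri B A C hB hA hC hcoefBAC
  have t3 : sphDist A B < sphDist A C + sphDist C B := sph_tri A C B hA hC hB hcoefACB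
  have hcomm1 : sphDist B A = sphDist A B := by rw [sphDist, sphDist, real_inner_comm]
  have hcomm2 : sphDist C B = sphDist B C := by rw [sphDist, sphDist, real_inner_comm]
  rw [hcomm1] at t2
  rw [hcomm2] at t3
  set a := sphDist B C with hadef
  set b := sphDist A C with hbdef
  set c := sphDist A B with hcdef
  have sABi := sph_strict_bds A B hA hB hAB hAB'
  have sBCi := sph_strict_bds B C hB hC hBC hBC'
  have sACi := sph_strict_bds A C hA hC hAC hAC'
  have ha0 : 0 < a := Real.arccos_pos.mpr sBCi.2
  have haπ : a < Real.pi := sph_arccos_lt_pi sBCi.1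
  have hb0 : 0 < b := Real.arccos_pos.mpr sACi.2
  have hbπ : b < Real.pi := sph_arccos_lt_pi sACi.1
  have hc0 : 0 < c := Real.arccos_pos.mpr sABi.2
  have hcπ : c < Real.pi := sph_arccos_lt_pi sABi.1
  set x := Real.cos (a / 2) with hxdef
  set y := Real.cos (b / 2) with hydef
  set z := Real.cos (c / 2) with hzdef
  set s := Real.sin (a / 2) with hsdef
  set r := Real.sin (c / 2) with hrdef
  have hx : 0 < x := Real.cos_pos_of_mem_Ioo ⟨by linarith [Real.pi_pos], by linarith⟩
  have hz : 0 < z := Real.cos_pos_of_mem_Ioo ⟨by linarith [Real.pi_pos], by linarith⟩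
  have hs2 : s ^ 2 = 1 - x ^ 2 := by
    rw [hsdef, hxdef]; linarith [Real.sin_sq_add_cos_sq (a / 2)]
  have hr2 : r ^ 2 = 1 - z ^ 2 := by
    rw [hrdef, hzdef]; linarith [Real.sin_sq_add_cos_sq (c / 2)]
  -- upper bound : y < x*z + s*r  (from |a - c| < b)
  have h_upper : y < x * z + s * r := by
    have hmem1 : |(a - c) / 2| ∈ Set.Icc 0 Real.pi :=
      ⟨abs_nonneg _, abs_le.mpr ⟨by linarith, by linarith⟩⟩
    have hmem2 : b / 2 ∈ Set.Icc 0 Real.pi := ⟨by linarith, by linarith⟩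
    have hlt : |(a - c) / 2| < b / 2 := abs_lt.mpr ⟨by linarith, by linarith⟩
    have habs := Real.strictAntiOn_cos hmem1 hmem2 hlt
    rw [Real.cos_abs] at habs
    rw [show (a - c) / 2 = a / 2 - c / 2 by ring, Real.cos_sub,
      ← hxdef, ← hzdef, ← hsdef, ← hrdef, ← hydef] at habs
    exact habs
  -- lower bound : x*z - s*r < y  (from b < a + c)
  have h_lower : x * z - s * r < y := by
    have hmem1 : b / 2 ∈ Set.Icc 0 Real.pi := ⟨by linarith, by linarith⟩
    have hmem2 : (a + c) / 2 ∈ Set.Icc 0 Real.pi := ⟨by linarith, by linarith⟩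
    have hlt : b / 2 < (a + c) / 2 := by linarith
    have habs := Real.strictAntiOn_cos hmem1 hmem2 hlt
    rw [show (a + c) / 2 = a / 2 + c / 2 by ring, Real.cos_add,
      ← hxdef, ← hzdef, ← hsdef, ← hrdef, ← hydef] at habs
    linarith
  have key : 2 * x ^ 2 + 2 * y ^ 2 + 2 * z ^ 2 - 2 < 4 * (z * (x * y)) := by
    have hprod : 0 < (x * z + s * r - y) * (y - (x * z - s * r)) :=
      mul_pos (by linarith) (by linarith)
    have hsr : s ^ 2 * r ^ 2 = (1 - x ^ 2) * (1 - z ^ 2) := by rw [hs2, hr2]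
    have hexp : (x * z + s * r - y) * (y - (x * z - s * r))
        = 1 - x ^ 2 - z ^ 2 - y ^ 2 + 2 * (x * y * z) := by
      linear_combination hsr
    rw [hexp] at hprod
    linarith [hprod]
  -- inner products as cosines
  have hcosc : Real.cos c = ⟪A, B⟫ := by
    rw [hcdef]; simp only [sphDist]; exact Real.cos_arccos sABi.1.le sABi.2.le
  have hcosb : Real.cos b = ⟪A, C⟫ := by
    rw [hbdef]; simp only [sphDist]; exact Real.cos_arccos sACi.1.le sACi.2.le
  have hcosa : Real.cos a = ⟪B, C⟫ := by
    rw [hadef]; simp only [sphDist]; exact Real.cos_arccos sBCi.1.le sBCi.2.le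
  have hABc : ⟪A, B⟫ = 2 * z ^ 2 - 1 := by
    rw [← hcosc, hzdef]
    have h := Real.cos_two_mul (c / 2)
    rw [show 2 * (c / 2) = c by ring] at h
    exact h
  have hACc : ⟪A, C⟫ = 2 * y ^ 2 - 1 := by
    rw [← hcosb, hydef]
    have h := Real.cos_two_mul (b / 2)
    rw [show 2 * (b / 2) = b by ring] at h
    exact h
  have hBCc : ⟪B, C⟫ = 2 * x ^ 2 - 1 := by
    rw [← hcosa, hxdef]
    have h := Real.cos_two_mul (a / 2)
    rw [show 2 * (a / 2) = a by ring] at h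
    exact h
  have hBB : ⟪B, B⟫ = 1 := by rw [real_inner_self_eq_norm_sq, hB]; norm_num
  have e1 : ⟪A + B, B + C⟫ = ⟪A, B⟫ + ⟪A, C⟫ + (⟪B, B⟫ + ⟪B, C⟫) := by
    simp only [inner_add_left, inner_add_right]
    ring
  have e2 : ⟪A + B, B + C⟫ = (2 * z) * ((2 * x) * ⟪D, E⟫) := by
    rw [hDrel, hErel, real_inner_smul_left, real_inner_smul_right]
  have h5 : (4 * (z * x)) * ⟪D, E⟫ = 2 * x ^ 2 + 2 * y ^ 2 + 2 * z ^ 2 - 2 := by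
    rw [hABc, hACc, hBCc, hBB] at e1
    linear_combination e1 - e2
  have h6 : (4 * (z * x)) * ⟪D, E⟫ < (4 * (z * x)) * y := by
    rw [h5]; linarith [key]
  have hDEy : ⟪D, E⟫ < y :=
    lt_of_mul_lt_mul_left h6 (by linarith [mul_pos hz hx])
  have bDE := sph_inner_bds D E hD hE
  show b / 2 < sphDist D E
  rw [sphDist]
  by_contra hcon
  push_neg at hcon
  have hle := Real.cos_le_cos_of_nonneg_of_le_pi (Real.arccos_nonneg _) (by linarith) hcon
  rw [Real.cos_arccos bDE.1 bDE.2] at hle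
  rw [← hydef] at hle
  linarith
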